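/- The contraction axiom fails over the reals without nonnegativity: there exists a real table p : Fin 2 × Fin 2 × Fin 2 → ℝ such that for each k the matrix (i,j) ↦ p(i,j,k) has all 2×2 minors zero, and the marginal matrix (j,k) ↦ p(0,j,k)+p(1,j,k) has all 2×2 minors zero, yet the 2×4 flattening with rows indexed by j and columns indexed by (i,k) has a nonzero 2×2 minor. -/
import Mathlib

/-- The contraction axiom fails over the reals without nonnegativity:
there is a real `2 × 2 × 2` table satisfying `1 ⫫ 2 | 3` and `2 ⫫ 3`
(all relevant `2 × 2` minors vanish) but not `2 ⫫ {1,3}`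
(some `2 × 2` minor of the `2 × 4` flattening is nonzero). -/
theorem contraction_fails_over_reals :
    ∃ p : Fin 2 × Fin 2 × Fin 2 → ℝ,
      (∀ i r j s : Fin 2, ∀ k : Fin 2,
        p (i, j, k) * p (r, s, k) - p (i, s, k) * p (r, j, k) = 0) ∧
      (∀ j s k t : Fin 2,
        (∑ i, p (i, j, k)) * (∑ i, p (i, s, t)) -
          (∑ i, p (i, j, t)) * (∑ i, p (i, s, k)) = 0) ∧
      (∃ (j s : Fin 2) (ik rt : Fin 2 × Fin 2),
        p (ik.1, j, ik.2) * p (rt.1, s, rt.2) -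
          p (rt.1, j, rt.2) * p (ik.1, s, ik.2) ≠ 0) := by
  refine ⟨fun x => ![![![1,1],![2,0]], ![![-1,0],![-2,0]]] x.1 x.2.1 x.2.2, ?_, ?_, ?_⟩
  · intro i r j s k
    fin_cases i <;> fin_cases r <;> fin_cases j <;> fin_cases s <;> fin_cases k <;> norm_num
  · intro j s k t
    fin_cases j <;> fin_cases s <;> fin_cases k <;> fin_cases t <;>
      simp [Fin.sum_univ_two] <;> norm_num
  · exact ⟨0, 1, (0,0), (0,1), by norm_num⟩
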